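/- Let ρ be a measure on (0, +∞) with ∫ min(v, v²) dρ(v) < +∞, and define J(z) = ∫ (e^{-zv} - 1 + zv) dρ(v) for z ≥ 0. Then min{1, t²}·J(z) ≤ J(tz) ≤ max{1, t²}·J(z) for all z ≥ 0 and t > 0. -/

import Mathlib

open Real MeasureTheory Set

lemma f_nonneg' (x : ℝ) : 0 ≤ Real.exp (-x) - 1 + x := by
  nlinarith [Real.add_one_le_exp (-x)]

lemma f_le_id' (x : ℝ) (hx : 0 ≤ x) : Real.exp (-x) - 1 + x ≤ x := by
  have : Real.exp (-x) ≤ 1 := Real.exp_le_one_iff.2 (by linarith)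
  linarith

lemma f_le_sq' (x : ℝ) (hx : 0 ≤ x) : Real.exp (-x) - 1 + x ≤ x ^ 2 := by
  have h1 := Real.add_one_le_exp x
  have h2 := Real.add_one_le_exp (-x)
  have hab : Real.exp (-x) * Real.exp x = 1 := by
    rw [← Real.exp_add]; simp
  have hpos := (Real.exp_pos (-x)).le
  nlinarith [mul_le_mul_of_nonneg_left h1 hpos,
    mul_nonneg (by linarith : (0:ℝ) ≤ Real.exp (-x) - (1 - x)) hx]

lemma f_mono' {a b : ℝ} (ha : 0 ≤ a) (hab : a ≤ b) :
    Real.exp (-a) - 1 + a ≤ Real.exp (-b) - 1 + b := by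
  have h1 : Real.exp (-b) = Real.exp (-a) * Real.exp (-(b-a)) := by
    rw [← Real.exp_add]; ring_nf
  have h2 : 1 - (b-a) ≤ Real.exp (-(b-a)) := by linarith [Real.add_one_le_exp (-(b-a))]
  have h3 : Real.exp (-a) ≤ 1 := Real.exp_le_one_iff.2 (by linarith)
  nlinarith [mul_le_mul_of_nonneg_left h2 (Real.exp_pos (-a)).le,
    mul_nonneg (Real.exp_pos (-a)).le (by linarith : (0:ℝ) ≤ b - a)]

lemma keyK (y : ℝ) (hy : 0 ≤ y) :
    y * (1 - Real.exp (-y)) ≤ 2 * (Real.exp (-y) - 1 + y) := by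
  have hphi : ∀ u : ℝ, 0 ≤ u → 0 ≤ (2 + u) * Real.exp (-u) + u - 2 := by
    intro u hu
    set φ : ℝ → ℝ := fun x => (2 + x) * Real.exp (-x) + x - 2 with hφ
    have hderiv : ∀ x : ℝ, HasDerivAt φ (1 - (1 + x) * Real.exp (-x)) x := by
      intro x
      have he : HasDerivAt (fun x : ℝ => Real.exp (-x)) (-Real.exp (-x)) x := by
        simpa using ((hasDerivAt_id' x).neg).exp
      have hl : HasDerivAt (fun x : ℝ => 2 + x) 1 x := by
        simpa using (hasDerivAt_id x).const_add 2
      have := ((hl.mul he).add (hasDerivAt_id x)).sub_const 2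
      exact this.congr_deriv (by ring)
    have hmono : Monotone φ := by
      apply monotone_of_deriv_nonneg (fun x => (hderiv x).differentiableAt)
      intro x
      rw [(hderiv x).deriv]
      have : (1 + x) * Real.exp (-x) ≤ Real.exp x * Real.exp (-x) :=
        mul_le_mul_of_nonneg_right (by linarith [Real.add_one_le_exp x]) (Real.exp_pos (-x)).le
      have hxx : Real.exp x * Real.exp (-x) = 1 := by rw [← Real.exp_add]; simp
      linarith
    have := hmono hu
    simpa [hφ] using this
  nlinarith [hphi y hy]

lemma f_scale (x : ℝ) (hx : 0 ≤ x) (t : ℝ) (ht : 1 ≤ t) :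
    Real.exp (-(t * x)) - 1 + t * x ≤ t ^ 2 * (Real.exp (-x) - 1 + x) := by
  set g : ℝ → ℝ := fun l => (Real.exp (-(l * x)) - 1 + l * x) / l ^ 2 with hg
  have hanti : AntitoneOn g (Set.Ici 1) := by
    have hderiv : ∀ l : ℝ, 0 < l → HasDerivAt g
        (((x - x * Real.exp (-(l * x))) * l ^ 2 -
          (Real.exp (-(l * x)) - 1 + l * x) * (2 * l)) / (l ^ 2) ^ 2) l := by
      intro l hl
      have hmul : HasDerivAt (fun l : ℝ => l * x) x l := by
        simpa using (hasDerivAt_id l).mul_const x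
      have he : HasDerivAt (fun l : ℝ => Real.exp (-(l * x))) (-x * Real.exp (-(l * x))) l := by
        have := hmul.fun_neg.exp
        convert this using 1
        ring
      have hnum : HasDerivAt (fun l : ℝ => Real.exp (-(l * x)) - 1 + l * x)
          (x - x * Real.exp (-(l * x))) l := by
        have := (he.sub_const 1).add hmul
        exact this.congr_deriv (by ring)
      have hden : HasDerivAt (fun l : ℝ => l ^ 2) (2 * l) l := by
        simpa [mul_comm] using hasDerivAt_pow 2 l
      exact hnum.div hden (by positivity)
    apply antitoneOn_of_deriv_nonpos (convex_Ici 1)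
    · apply ContinuousOn.div
      · fun_prop
      · fun_prop
      · intro l hl
        have : (1:ℝ) ≤ l := hl
        positivity
    · intro l hl
      rw [interior_Ici] at hl
      exact ((hderiv l (by linarith [mem_Ioi.1 hl])).differentiableAt).differentiableWithinAt
    · intro l hl
      rw [interior_Ici] at hl
      have hl1 : (1:ℝ) < l := hl
      have hl0 : 0 < l := by linarith
      rw [(hderiv l hl0).deriv]
      apply div_nonpos_of_nonpos_of_nonneg _ (by positivity)
      have hK := keyK (l * x) (by positivity)
      have : (x - x * Real.exp (-(l * x))) * l ^ 2 -
          (Real.exp (-(l * x)) - 1 + l * x) * (2 * l)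
          = l * ((l * x) * (1 - Real.exp (-(l * x))) -
            2 * (Real.exp (-(l * x)) - 1 + l * x)) := by ring
      rw [this]
      exact mul_nonpos_of_nonneg_of_nonpos hl0.le (by linarith)
  have h1 : g t ≤ g 1 := hanti (by simp) (by simpa using ht) ht
  have ht0 : (0:ℝ) < t := by linarith
  have hg1 : g 1 = Real.exp (-x) - 1 + x := by simp [hg]
  rw [hg1] at h1
  have := (div_le_iff₀ (by positivity : (0:ℝ) < t ^ 2)).1 (by simpa [hg] using h1)
  linarith

lemma integrable_f' (ρ : Measure ℝ) (hρ : ρ (Set.Iic 0) = 0)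
    (hint : ∫⁻ v, ENNReal.ofReal (min v (v ^ 2)) ∂ρ < ⊤)
    (s : ℝ) (hs : 0 ≤ s) :
    Integrable (fun v => Real.exp (-(s * v)) - 1 + s * v) ρ := by
  have hae : ∀ᵐ v ∂ρ, 0 < v := by
    rw [ae_iff]
    convert hρ using 2
    ext v
    simp [not_lt]
  have hcont : Continuous fun v : ℝ => Real.exp (-(s * v)) - 1 + s * v := by fun_prop
  refine ⟨hcont.aestronglyMeasurable, ?_⟩
  rw [hasFiniteIntegral_def]
  have hbound : ∀ᵐ v ∂ρ, (‖Real.exp (-(s * v)) - 1 + s * v‖₊ : ENNReal) ≤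
      ENNReal.ofReal (max s (s ^ 2)) * ENNReal.ofReal (min v (v ^ 2)) := by
    filter_upwards [hae] with v hv
    rw [← enorm_eq_nnnorm, Real.enorm_eq_ofReal (f_nonneg' (s * v)),
      ← ENNReal.ofReal_mul (le_max_of_le_left hs)]
    apply ENNReal.ofReal_le_ofReal
    have hsv : 0 ≤ s * v := by positivity
    rcases le_total v 1 with h1 | h1
    · have hm : min v (v ^ 2) = v ^ 2 := by
        rw [min_eq_right]; nlinarith
      rw [hm]
      calc Real.exp (-(s * v)) - 1 + s * v ≤ (s * v) ^ 2 := f_le_sq' _ hsv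
        _ = s ^ 2 * v ^ 2 := by ring
        _ ≤ max s (s ^ 2) * v ^ 2 := by
            apply mul_le_mul_of_nonneg_right (le_max_right _ _) (by positivity)
    · have hm : min v (v ^ 2) = v := by
        rw [min_eq_left]; nlinarith
      rw [hm]
      calc Real.exp (-(s * v)) - 1 + s * v ≤ s * v := f_le_id' _ hsv
        _ ≤ max s (s ^ 2) * v := by
            apply mul_le_mul_of_nonneg_right (le_max_left _ _) (by positivity)
  calc ∫⁻ v, (‖Real.exp (-(s * v)) - 1 + s * v‖₊ : ENNReal) ∂ρ
      ≤ ∫⁻ v, ENNReal.ofReal (max s (s ^ 2)) * ENNReal.ofReal (min v (v ^ 2)) ∂ρ :=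
        lintegral_mono_ae hbound
    _ = ENNReal.ofReal (max s (s ^ 2)) * ∫⁻ v, ENNReal.ofReal (min v (v ^ 2)) ∂ρ :=
        lintegral_const_mul' _ _ ENNReal.ofReal_ne_top
    _ < ⊤ := ENNReal.mul_lt_top ENNReal.ofReal_lt_top hint

theorem stmt_4 (ρ : Measure ℝ) (hρ : ρ (Set.Iic 0) = 0)
    (hint : ∫⁻ v, ENNReal.ofReal (min v (v ^ 2)) ∂ρ < ⊤)
    (J : ℝ → ℝ)
    (hJ : ∀ z, J z = ∫ v, (Real.exp (-(z * v)) - 1 + z * v) ∂ρ) :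
    ∀ z ≥ (0:ℝ), ∀ t > (0:ℝ),
      min 1 (t ^ 2) * J z ≤ J (t * z) ∧ J (t * z) ≤ max 1 (t ^ 2) * J z := by
  intro z hz t ht
  have hae : ∀ᵐ v ∂ρ, 0 < v := by
    rw [ae_iff]
    convert hρ using 2
    ext v
    simp [not_lt]
  have htz : 0 ≤ t * z := by positivity
  have hIz : Integrable (fun v => Real.exp (-(z * v)) - 1 + z * v) ρ :=
    integrable_f' ρ hρ hint z hz
  have hItz : Integrable (fun v => Real.exp (-(t * z * v)) - 1 + t * z * v) ρ :=
    integrable_f' ρ hρ hint (t * z) htz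
  rw [hJ z, hJ (t * z)]
  constructor
  · rw [← MeasureTheory.integral_const_mul]
    apply integral_mono_ae (hIz.const_mul _) hItz
    filter_upwards [hae] with v hv
    have hzv : 0 ≤ z * v := by positivity
    rcases le_total 1 t with h1 | h1
    · have hmin : min 1 (t ^ 2) = 1 := min_eq_left (by nlinarith)
      rw [hmin, one_mul]
      have : z * v ≤ t * z * v := by nlinarith
      simpa [neg_mul] using f_mono' hzv this
    · have hmin : min 1 (t ^ 2) = t ^ 2 := min_eq_right (by nlinarith)
      rw [hmin]
      have hs := f_scale (t * z * v) (by positivity) (1 / t) (by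
        rw [le_div_iff₀ ht]; linarith)
      have heq : 1 / t * (t * z * v) = z * v := by field_simp
      rw [heq] at hs
      have h2 : t ^ 2 * ((1 / t) ^ 2 * (Real.exp (-(t * z * v)) - 1 + t * z * v))
          = Real.exp (-(t * z * v)) - 1 + t * z * v := by
        field_simp
      calc t ^ 2 * (Real.exp (-(z * v)) - 1 + z * v)
          ≤ t ^ 2 * ((1 / t) ^ 2 * (Real.exp (-(t * z * v)) - 1 + t * z * v)) := by
            apply mul_le_mul_of_nonneg_left _ (by positivity)
            linarith
        _ = Real.exp (-(t * z * v)) - 1 + t * z * v := h2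
  · rw [← MeasureTheory.integral_const_mul]
    apply integral_mono_ae hItz (hIz.const_mul _)
    filter_upwards [hae] with v hv
    have hzv : 0 ≤ z * v := by positivity
    rcases le_total 1 t with h1 | h1
    · have hmax : max 1 (t ^ 2) = t ^ 2 := max_eq_right (by nlinarith)
      rw [hmax]
      have hs := f_scale (z * v) hzv t h1
      have heq : t * (z * v) = t * z * v := by ring
      rw [heq] at hs
      exact hs
    · have hmax : max 1 (t ^ 2) = 1 := max_eq_left (by nlinarith)
      rw [hmax, one_mul]
      have : t * z * v ≤ z * v := by nlinarith
      exact f_mono' (by positivity) this
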